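/- Let A be an abelian category with a projective class P and X → A an augmented pseudocubical object with pseudoconnections in A. If X → A is P-exact, then the augmented chain complex N(X) → A (with augmentation ∂ : N_0(X) = X_0 → A) is P-exact in the sense of Eilenberg–Moore: for every Q ∈ P, the induced sequence ⋯ → Hom(Q, N_n(X)) → Hom(Q, N_{n−1}(X)) → ⋯ → Hom(Q, N_0(X)) → Hom(Q, A) → 0 is exact. -/

import Mathlib

open CategoryTheory CategoryTheory.Limits
universe v u

/-- A precubical object in a category `C`. `d n i ε : X (n+1) ⟶ X n` is the face
`∂_i^ε` for `1 ≤ i ≤ n+1`; values outside this range are junk. -/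
structure Precub (C : Type u) [Category.{v} C] where
  X : ℕ → C
  d : ∀ n : ℕ, ℕ → Bool → (X (n + 1) ⟶ X n)
  dd : ∀ (n i j : ℕ) (α ε : Bool), 1 ≤ i → i < j → j ≤ n + 2 →
    d (n + 1) j ε ≫ d n i α = d (n + 1) i α ≫ d n (j - 1) ε

/-- `f` is `P`-epimorphic. -/
def PEpi {C : Type u} [Category.{v} C] (P : C → Prop) {A B : C} (f : A ⟶ B) : Prop :=
  ∀ Q : C, P Q → ∀ g : Q ⟶ B, ∃ h : Q ⟶ A, h ≫ f = g

/-- `P` is a projective class. -/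
def IsProjectiveClass {C : Type u} [Category.{v} C] (P : C → Prop) : Prop :=
  ∀ A : C, ∃ (Q : C) (e : Q ⟶ A), P Q ∧ PEpi P e

/-- The canonical factorization data of an augmented precubical object `X → A`:
`K 0` is the kernel pair of the augmentation, and `K (n+1)` is the cubical kernel of the
faces `∂_1^0, …, ∂_{n+1}^0, ∂_1^1, …, ∂_{n+1}^1 : X_{n+1} ⟶ X_n`, with
`e n : X_{n+1} ⟶ K n` the canonical morphism. -/
structure KernelData {C : Type u} [Category.{v} C] (X : Precub C) {A : C}
    (aug : X.X 0 ⟶ A) where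
  K : ℕ → C
  k : ∀ n : ℕ, ℕ → Bool → (K n ⟶ X.X n)
  e : ∀ n : ℕ, X.X (n + 1) ⟶ K n
  pair_w : k 0 1 false ≫ aug = k 0 1 true ≫ aug
  pair_univ : ∀ {D : C} (h₀ h₁ : D ⟶ X.X 0), h₀ ≫ aug = h₁ ≫ aug →
    ∃! l : D ⟶ K 0, l ≫ k 0 1 false = h₀ ∧ l ≫ k 0 1 true = h₁
  ck_w : ∀ (n i j : ℕ) (ω α : Bool), 1 ≤ i → i < j → j ≤ n + 2 →
    k (n + 1) j α ≫ X.d n i ω = k (n + 1) i ω ≫ X.d n (j - 1) α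
  ck_univ : ∀ (n : ℕ) {D : C} (h : ℕ → Bool → (D ⟶ X.X (n + 1))),
    (∀ (i j : ℕ) (ω α : Bool), 1 ≤ i → i < j → j ≤ n + 2 →
      h j α ≫ X.d n i ω = h i ω ≫ X.d n (j - 1) α) →
    ∃! l : D ⟶ K (n + 1), ∀ (i : ℕ) (ω : Bool), 1 ≤ i → i ≤ n + 2 →
      l ≫ k (n + 1) i ω = h i ω
  e_k : ∀ (n i : ℕ) (ε : Bool), 1 ≤ i → i ≤ n + 1 → e n ≫ k n i ε = X.d n i ε

/-- A pseudocubical object: a precubical object with pseudodegeneracies. -/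
structure Pseudocub (C : Type u) [Category.{v} C] extends Precub C where
  s : ∀ n : ℕ, ℕ → (X n ⟶ X (n + 1))
  ds_lt : ∀ (n i j : ℕ) (α : Bool), 1 ≤ i → i < j → j ≤ n + 2 →
    s (n + 1) j ≫ d (n + 1) i α = d n i α ≫ s n (j - 1)
  ds_eq : ∀ (n i : ℕ) (α : Bool), 1 ≤ i → i ≤ n + 1 → s n i ≫ d n i α = 𝟙 (X n)
  ds_gt : ∀ (n i j : ℕ) (α : Bool), 1 ≤ j → j < i → i ≤ n + 2 →
    s (n + 1) j ≫ d (n + 1) i α = d n (i - 1) α ≫ s n j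

/-- A pseudocubical object with pseudoconnections. -/
structure PseudocubConn (C : Type u) [Category.{v} C] extends Pseudocub C where
  conn : ∀ n : ℕ, ℕ → (X (n + 1) ⟶ X (n + 2))
  dconn_lt : ∀ (n i j : ℕ) (α : Bool), 1 ≤ i → i < j → j ≤ n + 2 →
    conn (n + 1) j ≫ d (n + 2) i α = d (n + 1) i α ≫ conn n (j - 1)
  dconn_eq_zero : ∀ (n j : ℕ), 1 ≤ j → j ≤ n + 1 →
    conn n j ≫ d (n + 1) j false = 𝟙 (X (n + 1)) ∧
    conn n j ≫ d (n + 1) (j + 1) false = 𝟙 (X (n + 1))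
  dconn_eq_one : ∀ (n j : ℕ), 1 ≤ j → j ≤ n + 1 →
    conn n j ≫ d (n + 1) j true = d n j true ≫ s n j ∧
    conn n j ≫ d (n + 1) (j + 1) true = d n j true ≫ s n j
  dconn_gt : ∀ (n i j : ℕ) (α : Bool), 1 ≤ j → j + 1 < i → i ≤ n + 3 →
    conn (n + 1) j ≫ d (n + 2) i α = d (n + 1) (i - 1) α ≫ conn n j

/-- Data exhibiting `K` as the normalized chain complex `N(X)` of a precubical object `X`
in an abelian category: `K_n` is the intersection of the kernels of the faces `∂_i^1`
with differential the (restricted) alternating sum `Σ (-1)^(i+1) ∂_i^0`. -/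
structure NormalizedData {C : Type u} [Category.{v} C] [Abelian C] (X : Precub C) where
  K : ChainComplex C ℕ
  ι : ∀ n, K.X n ⟶ X.X n
  ι_mono : ∀ n, Mono (ι n)
  ι_ker : ∀ (n i : ℕ), 1 ≤ i → i ≤ n + 1 → ι (n + 1) ≫ X.d n i true = 0
  ι_lift : ∀ (n : ℕ) {W : C} (g : W ⟶ X.X (n + 1)),
    (∀ i, 1 ≤ i → i ≤ n + 1 → g ≫ X.d n i true = 0) →
    ∃ l : W ⟶ K.X (n + 1), l ≫ ι (n + 1) = g
  ι_lift₀ : ∀ {W : C} (g : W ⟶ X.X 0), ∃ l : W ⟶ K.X 0, l ≫ ι 0 = g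
  diff : ∀ n : ℕ, K.d (n + 1) n ≫ ι n =
    ι (n + 1) ≫ ∑ i ∈ Finset.Icc 1 (n + 1), ((-1 : ℤ) ^ (i + 1)) • X.d n i false

section Stmt16Aux

variable {C : Type u} [Category.{v} C] [Preadditive C]

/-- Alternating sum of the `∂^0` faces. -/
def stmt16bd (X : Precub C) (m : ℕ) : X.X (m + 1) ⟶ X.X m :=
  ∑ i ∈ Finset.Icc 1 (m + 1), ((-1 : ℤ) ^ (i + 1)) • X.d m i false

lemma stmt16comp_bd {Q : C} (X : Precub C) (m : ℕ) (f : Q ⟶ X.X (m + 1)) :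
    f ≫ stmt16bd X m
      = ∑ i ∈ Finset.Icc 1 (m + 1), ((-1 : ℤ) ^ (i + 1)) • (f ≫ X.d m i false) := by
  simp [stmt16bd, Preadditive.comp_sum, Preadditive.comp_zsmul]

lemma stmt16bd_bd (X : Precub C) (m : ℕ) : stmt16bd X (m + 1) ≫ stmt16bd X m = 0 := by
  have expand : stmt16bd X (m + 1) ≫ stmt16bd X m
      = ∑ p ∈ Finset.Icc 1 (m + 2) ×ˢ Finset.Icc 1 (m + 1),
          ((-1 : ℤ) ^ (p.1 + p.2)) • (X.d (m + 1) p.1 false ≫ X.d m p.2 false) := by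
    rw [Finset.sum_product,
      show stmt16bd X (m + 1)
        = ∑ j ∈ Finset.Icc 1 (m + 2), ((-1 : ℤ) ^ (j + 1)) • X.d (m + 1) j false from rfl,
      Preadditive.sum_comp]
    refine Finset.sum_congr rfl fun j _ => ?_
    rw [Preadditive.zsmul_comp, stmt16comp_bd X m (X.d (m + 1) j false), Finset.smul_sum]
    refine Finset.sum_congr rfl fun i _ => ?_
    have hsc : ((-1 : ℤ)) ^ (j + 1) * ((-1 : ℤ)) ^ (i + 1) = ((-1 : ℤ)) ^ (j + i) := by
      rw [← pow_add, show j + 1 + (i + 1) = j + i + 2 by omega, pow_add, neg_one_sq, mul_one]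
    rw [smul_smul, hsc]
  rw [expand, ← Finset.sum_filter_add_sum_filter_not
    (Finset.Icc 1 (m + 2) ×ˢ Finset.Icc 1 (m + 1)) (fun p => p.1 ≤ p.2)]
  have h1 : ∑ p ∈ (Finset.Icc 1 (m + 2) ×ˢ Finset.Icc 1 (m + 1)).filter (fun p => p.1 ≤ p.2),
        ((-1 : ℤ) ^ (p.1 + p.2)) • (X.d (m + 1) p.1 false ≫ X.d m p.2 false)
      = ∑ p ∈ (Finset.Icc 1 (m + 2) ×ˢ Finset.Icc 1 (m + 1)).filter (fun p => ¬ p.1 ≤ p.2),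
          -(((-1 : ℤ) ^ (p.1 + p.2)) • (X.d (m + 1) p.1 false ≫ X.d m p.2 false)) := by
    refine Finset.sum_bij' (fun p _ => (p.2 + 1, p.1)) (fun p _ => (p.2, p.1 - 1)) ?_ ?_ ?_ ?_ ?_
    · intro p hp
      simp only [Finset.mem_filter, Finset.mem_product, Finset.mem_Icc] at hp ⊢
      omega
    · intro p hp
      simp only [Finset.mem_filter, Finset.mem_product, Finset.mem_Icc] at hp ⊢
      omega
    · rintro ⟨x, y⟩ hp
      simp only [Finset.mem_filter, Finset.mem_product, Finset.mem_Icc] at hp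
      simp only [Prod.mk.injEq]
      exact ⟨trivial, by omega⟩
    · rintro ⟨x, y⟩ hp
      simp only [Finset.mem_filter, Finset.mem_product, Finset.mem_Icc] at hp
      simp only [Prod.mk.injEq]
      exact ⟨by omega, trivial⟩
    · intro p hp
      simp only [Finset.mem_filter, Finset.mem_product, Finset.mem_Icc] at hp
      obtain ⟨⟨⟨ha1, ha2⟩, hb1, hb2⟩, hle⟩ := hp
      have hdd := X.dd m p.1 (p.2 + 1) false false ha1 (by omega) (by omega)
      simp only [Nat.add_sub_cancel] at hdd
      rw [hdd, show p.2 + 1 + p.1 = (p.1 + p.2) + 1 by omega, pow_succ]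
      simp
  rw [h1, ← Finset.sum_add_distrib]
  simp

end Stmt16Aux

lemma stmt16step {C : Type u} [Category.{v} C] [Preadditive C] {Q : C}
    (X : PseudocubConn C) (n k : ℕ) (hk1 : 1 ≤ k) (hk2 : k ≤ n + 1)
    (a : Q ⟶ X.X (n + 1))
    (hT : ∀ i, 1 ≤ i → i ≤ n + 1 → a ≫ X.d n i true = 0)
    (hF : ∀ m, k < m → m ≤ n + 1 → a ≫ X.d n m false = 0)
    (hC : a ≫ stmt16bd X.toPrecub n = 0) :
    ∃ a' : Q ⟶ X.X (n + 1), ∃ c : Q ⟶ X.X (n + 2),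
      (∀ i, 1 ≤ i → i ≤ n + 1 → a' ≫ X.d n i true = 0) ∧
      (∀ m, k ≤ m → m ≤ n + 1 → a' ≫ X.d n m false = 0) ∧
      (a' ≫ stmt16bd X.toPrecub n = 0) ∧
      (∀ i, 1 ≤ i → i ≤ n + 2 → c ≫ X.d (n + 1) i true = 0) ∧
      a = a' + c ≫ stmt16bd X.toPrecub (n + 1) := by
  set c₀ : Q ⟶ X.X (n + 2) := a ≫ X.conn n k with hc₀
  -- basic faces of c₀
  have cfk : c₀ ≫ X.d (n + 1) k false = a := by
    rw [hc₀, Category.assoc, (X.dconn_eq_zero n k hk1 hk2).1, Category.comp_id]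
  have cfk1 : c₀ ≫ X.d (n + 1) (k + 1) false = a := by
    rw [hc₀, Category.assoc, (X.dconn_eq_zero n k hk1 hk2).2, Category.comp_id]
  have cflt0 : ∀ i ε, 1 ≤ i → i < k → a ≫ X.d n i ε = 0 → c₀ ≫ X.d (n + 1) i ε = 0 := by
    intro i ε h1 h2 hz
    obtain ⟨m, rfl⟩ : ∃ m, n = m + 1 := ⟨n - 1, by omega⟩
    rw [hc₀, Category.assoc, X.dconn_lt m i k ε h1 h2 (by omega), ← Category.assoc, hz,
      zero_comp]
  have cfgt0 : ∀ i ε, k + 1 < i → i ≤ n + 2 → a ≫ X.d n (i - 1) ε = 0 →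
      c₀ ≫ X.d (n + 1) i ε = 0 := by
    intro i ε h2 h3 hz
    obtain ⟨m, rfl⟩ : ∃ m, n = m + 1 := ⟨n - 1, by omega⟩
    rw [hc₀, Category.assoc, X.dconn_gt m i k ε hk1 h2 (by omega), ← Category.assoc, hz,
      zero_comp]
  have cflt_face : ∀ i, 1 ≤ i → i < k → ∀ m', k ≤ m' → m' ≤ n + 1 →
      c₀ ≫ (X.d (n + 1) i false ≫ X.d n m' false)
        = if m' = k then a ≫ X.d n i false else 0 := by
    intro i h1 h2 m' hm1 hm2
    obtain ⟨m, rfl⟩ : ∃ m, n = m + 1 := ⟨n - 1, by omega⟩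
    rw [hc₀, Category.assoc, reassoc_of% (X.dconn_lt m i k false h1 h2 (by omega))]
    by_cases h6 : m' = k
    · have hcz := (X.dconn_eq_zero m (k - 1) (by omega) (by omega)).2
      rw [show k - 1 + 1 = k by omega] at hcz
      rw [if_pos h6, h6, hcz, Category.comp_id]
    · rw [if_neg h6]
      have h7 : k < m' := by omega
      obtain ⟨u, rfl⟩ : ∃ u, m = u + 1 := ⟨m - 1, by omega⟩
      rw [X.dconn_gt u m' (k - 1) false (by omega) (by omega) (by omega)]
      have hdd := X.dd (u + 1) i m' false false h1 (by omega) (by omega)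
      rw [← reassoc_of% hdd, ← Category.assoc, hF m' (by omega) (by omega), zero_comp]
  have cftrue : ∀ i, 1 ≤ i → i ≤ n + 2 → c₀ ≫ X.d (n + 1) i true = 0 := by
    intro i h1 h2
    by_cases h3 : i < k
    · exact cflt0 i true h1 h3 (hT i h1 (by omega))
    by_cases h4 : i = k
    · subst h4
      rw [hc₀, Category.assoc, (X.dconn_eq_one n i hk1 hk2).1, ← Category.assoc,
        hT i hk1 hk2, zero_comp]
    by_cases h5 : i = k + 1
    · subst h5
      rw [hc₀, Category.assoc, (X.dconn_eq_one n k hk1 hk2).2, ← Category.assoc,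
        hT k hk1 hk2, zero_comp]
    · exact cfgt0 i true (by omega) h2 (hT (i - 1) (by omega) (by omega))
  -- expansion of faces of c₀ ≫ bd
  have vexp : ∀ (m' : ℕ) (ε : Bool), (c₀ ≫ stmt16bd X.toPrecub (n + 1)) ≫ X.d n m' ε
      = ∑ i ∈ Finset.Icc 1 (n + 2),
          ((-1 : ℤ) ^ (i + 1)) • (c₀ ≫ (X.d (n + 1) i false ≫ X.d n m' ε)) := by
    intro m' ε
    rw [stmt16comp_bd, Preadditive.sum_comp]
    refine Finset.sum_congr rfl fun i _ => ?_
    rw [Preadditive.zsmul_comp, Category.assoc]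
  -- the key face computation
  have face_v : ∀ m', k ≤ m' → m' ≤ n + 1 → ∀ i, 1 ≤ i → i ≤ n + 2 →
      c₀ ≫ (X.d (n + 1) i false ≫ X.d n m' false) =
        if i = k ∨ i = k + 1 then a ≫ X.d n m' false
        else if m' = k ∧ i < k then a ≫ X.d n i false
        else 0 := by
    intro m' hm1 hm2 i h1 h2
    by_cases h3 : i = k
    · rw [if_pos (Or.inl h3), h3, ← Category.assoc, cfk]
    by_cases h4 : i = k + 1
    · rw [if_pos (Or.inr h4), h4, ← Category.assoc, cfk1]
    rw [if_neg (by tauto)]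
    by_cases h5 : i < k
    · rw [cflt_face i h1 h5 m' hm1 hm2]
      by_cases h6 : m' = k
      · rw [if_pos h6, if_pos ⟨h6, h5⟩]
      · rw [if_neg h6, if_neg (by tauto)]
    · -- i > k + 1
      rw [if_neg (by tauto), ← Category.assoc,
        cfgt0 i false (by omega) h2 (hF (i - 1) (by omega) (by omega)), zero_comp]
  -- vanishing of the high false-faces of c₀ ≫ bd
  have va : ∀ m', k < m' → m' ≤ n + 1 →
      (c₀ ≫ stmt16bd X.toPrecub (n + 1)) ≫ X.d n m' false = 0 := by
    intro m' hm1 hm2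
    rw [vexp m' false]
    refine Finset.sum_eq_zero fun i hi => ?_
    simp only [Finset.mem_Icc] at hi
    rw [face_v m' (by omega) hm2 i hi.1 hi.2]
    by_cases h3 : i = k ∨ i = k + 1
    · rw [if_pos h3, hF m' hm1 hm2, smul_zero]
    · rw [if_neg h3, if_neg (by rintro ⟨h, -⟩; omega), smul_zero]
  -- the k-th false-face of c₀ ≫ bd
  have hC' : ∑ i ∈ Finset.Icc 1 (n + 1), ((-1 : ℤ) ^ (i + 1)) • (a ≫ X.d n i false) = 0 := by
    rw [← stmt16comp_bd]; exact hC
  have hlow : ∑ i ∈ Finset.Icc 1 k, ((-1 : ℤ) ^ (i + 1)) • (a ≫ X.d n i false) = 0 := by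
    have hsplit : (∑ i ∈ Finset.Ioc 0 k, ((-1 : ℤ) ^ (i + 1)) • (a ≫ X.d n i false))
        + (∑ i ∈ Finset.Ioc k (n + 1), ((-1 : ℤ) ^ (i + 1)) • (a ≫ X.d n i false))
        = ∑ i ∈ Finset.Ioc 0 (n + 1), ((-1 : ℤ) ^ (i + 1)) • (a ≫ X.d n i false) :=
      Finset.sum_Ioc_consecutive _ (Nat.zero_le k) (by omega)
    have hhigh : ∑ i ∈ Finset.Ioc k (n + 1), ((-1 : ℤ) ^ (i + 1)) • (a ≫ X.d n i false) = 0 :=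
      Finset.sum_eq_zero fun i hi => by
        simp only [Finset.mem_Ioc] at hi
        rw [hF i hi.1 hi.2, smul_zero]
    rw [hhigh, add_zero, show Finset.Ioc 0 (n + 1) = Finset.Icc 1 (n + 1) from
      (Finset.Icc_add_one_left_eq_Ioc 0 (n + 1)).symm, hC'] at hsplit
    rw [show Finset.Icc 1 k = Finset.Ioc 0 k from Finset.Icc_add_one_left_eq_Ioc 0 k]
    exact hsplit
  have vb : (c₀ ≫ stmt16bd X.toPrecub (n + 1)) ≫ X.d n k false
      = ((-1 : ℤ) ^ k) • (a ≫ X.d n k false) := by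
    rw [vexp k false]
    have hterm : ∀ i ∈ Finset.Icc 1 (n + 2),
        ((-1 : ℤ) ^ (i + 1)) • (c₀ ≫ (X.d (n + 1) i false ≫ X.d n k false))
        = (if i ∈ Finset.Icc 1 k then ((-1 : ℤ) ^ (i + 1)) • (a ≫ X.d n i false) else 0)
          + (if i = k + 1 then ((-1 : ℤ) ^ k) • (a ≫ X.d n k false) else 0) := by
      intro i hi
      simp only [Finset.mem_Icc] at hi
      rw [face_v k (le_refl k) hk2 i hi.1 hi.2]
      by_cases h3 : i = k
      · subst h3
        rw [if_pos (Or.inl rfl), if_pos (by simp only [Finset.mem_Icc]; omega),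
          if_neg (by omega), add_zero]
      by_cases h4 : i = k + 1
      · subst h4
        rw [if_pos (Or.inr rfl), if_neg (by simp only [Finset.mem_Icc]; omega), if_pos rfl,
          zero_add, show k + 1 + 1 = k + 2 from rfl, pow_add, neg_one_sq, mul_one]
      rw [if_neg (by tauto)]
      by_cases h5 : i < k
      · rw [if_pos ⟨rfl, h5⟩, if_pos (by simp only [Finset.mem_Icc]; omega),
          if_neg (by omega), add_zero]
      · rw [if_neg (by tauto), smul_zero, if_neg (by simp only [Finset.mem_Icc]; omega),
          if_neg (by omega), add_zero]
    rw [Finset.sum_congr rfl hterm, Finset.sum_add_distrib, Finset.sum_ite_mem,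
      Finset.inter_eq_right.mpr (Finset.Icc_subset_Icc (le_refl 1) (by omega)), hlow,
      Finset.sum_ite_eq' (Finset.Icc 1 (n + 2)) (k + 1)
        (fun _ => ((-1 : ℤ) ^ k) • (a ≫ X.d n k false)),
      if_pos (by simp only [Finset.mem_Icc]; omega), zero_add]
  -- the true faces of c₀ ≫ bd vanish
  have vtrue : ∀ i', 1 ≤ i' → i' ≤ n + 1 →
      (c₀ ≫ stmt16bd X.toPrecub (n + 1)) ≫ X.d n i' true = 0 := by
    intro i' h1 h2
    rw [vexp i' true]
    refine Finset.sum_eq_zero fun i hi => ?_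
    simp only [Finset.mem_Icc] at hi
    by_cases h3 : i' < i
    · have hdd := X.dd n i' i true false h1 h3 hi.2
      rw [hdd, ← Category.assoc, cftrue i' h1 (by omega), zero_comp, smul_zero]
    · have hdd := X.dd n i (i' + 1) false true hi.1 (by omega) (by omega)
      simp only [Nat.add_sub_cancel] at hdd
      rw [← hdd, ← Category.assoc, cftrue (i' + 1) (by omega) (by omega), zero_comp, smul_zero]
  -- assemble
  refine ⟨a - ((-1 : ℤ) ^ k • c₀) ≫ stmt16bd X.toPrecub (n + 1), (-1 : ℤ) ^ k • c₀,
    ?_, ?_, ?_, ?_, ?_⟩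
  · intro i h1 h2
    rw [Preadditive.sub_comp, hT i h1 h2, Preadditive.zsmul_comp, Preadditive.zsmul_comp,
      vtrue i h1 h2, smul_zero, sub_zero]
  · intro m hm1 hm2
    rw [Preadditive.sub_comp, Preadditive.zsmul_comp, Preadditive.zsmul_comp]
    by_cases h3 : m = k
    · rw [h3, vb, smul_smul, ← pow_add, Even.neg_one_pow ⟨k, rfl⟩, one_smul, sub_self]
    · rw [va m (by omega) hm2, smul_zero, hF m (by omega) hm2, sub_zero]
  · rw [Preadditive.sub_comp, hC, Preadditive.zsmul_comp, Preadditive.zsmul_comp,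
      Category.assoc, stmt16bd_bd, comp_zero, smul_zero, sub_zero]
  · intro i h1 h2
    rw [Preadditive.zsmul_comp, cftrue i h1 h2, smul_zero]
  · rw [sub_add_cancel]

lemma stmt16iterate {C : Type u} [Category.{v} C] [Preadditive C] {Q : C}
    (X : PseudocubConn C) (n : ℕ) (a₀ : Q ⟶ X.X (n + 1))
    (hT : ∀ i, 1 ≤ i → i ≤ n + 1 → a₀ ≫ X.d n i true = 0)
    (hC : a₀ ≫ stmt16bd X.toPrecub n = 0) :
    ∀ t, t ≤ n + 1 → ∃ a : Q ⟶ X.X (n + 1), ∃ c : Q ⟶ X.X (n + 2),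
      (∀ i, 1 ≤ i → i ≤ n + 1 → a ≫ X.d n i true = 0) ∧
      (∀ m, n + 1 - t < m → m ≤ n + 1 → a ≫ X.d n m false = 0) ∧
      (a ≫ stmt16bd X.toPrecub n = 0) ∧
      (∀ i, 1 ≤ i → i ≤ n + 2 → c ≫ X.d (n + 1) i true = 0) ∧
      a₀ = a + c ≫ stmt16bd X.toPrecub (n + 1) := by
  intro t
  induction t with
  | zero =>
    exact fun _ => ⟨a₀, 0, hT, fun m hm1 hm2 => absurd hm1 (by omega), hC,
      fun i _ _ => zero_comp, by simp⟩
  | succ t ih =>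
    intro ht
    obtain ⟨a, c, h1, h2, h3, h4, h5⟩ := ih (by omega)
    obtain ⟨a', c', g1, g2, g3, g4, g5⟩ :=
      stmt16step X n (n + 1 - t) (by omega) (by omega) a h1 h2 h3
    refine ⟨a', c + c', g1, fun m hm1 hm2 => g2 m (by omega) hm2, g3,
      fun i hi1 hi2 => by rw [Preadditive.add_comp, h4 i hi1 hi2, g4 i hi1 hi2, add_zero], ?_⟩
    rw [h5, g5, Preadditive.add_comp]
    abel

theorem stmt16' {C : Type u} [Category.{v} C] [Abelian C] (P : C → Prop)
    (hP : IsProjectiveClass P)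
    (X : PseudocubConn C) {A : C} (aug : X.X 0 ⟶ A)
    (haug : X.d 0 1 false ≫ aug = X.d 0 1 true ≫ aug)
    (KD : KernelData X.toPrecub aug)
    (hexact : PEpi P aug ∧ ∀ n, PEpi P (KD.e n))
    (ND : NormalizedData X.toPrecub) :
    (ND.K.d 1 0 ≫ ND.ι 0 ≫ aug = 0) ∧
    ∀ Q : C, P Q →
      (∀ g : Q ⟶ A, ∃ l : Q ⟶ ND.K.X 0, l ≫ ND.ι 0 ≫ aug = g) ∧
      (∀ g : Q ⟶ ND.K.X 0, g ≫ ND.ι 0 ≫ aug = 0 →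
        ∃ l : Q ⟶ ND.K.X 1, l ≫ ND.K.d 1 0 = g) ∧
      (∀ (n : ℕ) (g : Q ⟶ ND.K.X (n + 1)), g ≫ ND.K.d (n + 1) n = 0 →
        ∃ l : Q ⟶ ND.K.X (n + 2), l ≫ ND.K.d (n + 2) (n + 1) = g) := by
  have hdiff : ∀ m : ℕ, ND.K.d (m + 1) m ≫ ND.ι m = ND.ι (m + 1) ≫ stmt16bd X.toPrecub m :=
    ND.diff
  constructor
  · rw [← Category.assoc, hdiff 0, Category.assoc, stmt16bd, Finset.Icc_self,
      Finset.sum_singleton]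
    rw [Preadditive.zsmul_comp, Preadditive.comp_zsmul, haug,
      ← Category.assoc, ND.ι_ker 0 1 le_rfl le_rfl, zero_comp, smul_zero]
  · intro Q hQ
    refine ⟨?_, ?_, ?_⟩
    · -- surjectivity onto A
      intro g
      obtain ⟨h, hh⟩ := hexact.1 Q hQ g
      obtain ⟨l, hl⟩ := ND.ι_lift₀ h
      exact ⟨l, by rw [← Category.assoc, hl, hh]⟩
    · -- exactness at degree 0
      intro g hg
      have hg' : (g ≫ ND.ι 0) ≫ aug = (0 : Q ⟶ X.X 0) ≫ aug := by
        rw [Category.assoc, hg, zero_comp]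
      obtain ⟨l₀, ⟨hl1, hl2⟩, -⟩ := KD.pair_univ (g ≫ ND.ι 0) 0 hg'
      obtain ⟨b, hb⟩ := hexact.2 0 Q hQ l₀
      have hbt : b ≫ X.d 0 1 true = 0 := by
        rw [← KD.e_k 0 1 true le_rfl le_rfl, ← Category.assoc, hb, hl2]
      obtain ⟨l, hl⟩ := ND.ι_lift 0 b (fun i h1 h2 => by
        have : i = 1 := by omega
        rw [this]; exact hbt)
      refine ⟨l, ?_⟩
      haveI := ND.ι_mono 0
      rw [← cancel_mono (ND.ι 0), Category.assoc, hdiff 0, stmt16bd, Finset.Icc_self,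
        Finset.sum_singleton, ← Category.assoc, hl, Preadditive.comp_zsmul]
      rw [show ((-1 : ℤ) ^ (1 + 1)) = 1 by norm_num, one_smul,
        ← KD.e_k 0 1 false le_rfl le_rfl, ← Category.assoc, hb, hl1]
    · -- exactness in higher degrees
      intro n g hg
      have hT : ∀ i, 1 ≤ i → i ≤ n + 1 → (g ≫ ND.ι (n + 1)) ≫ X.d n i true = 0 :=
        fun i h1 h2 => by rw [Category.assoc, ND.ι_ker n i h1 h2, comp_zero]
      have hC : (g ≫ ND.ι (n + 1)) ≫ stmt16bd X.toPrecub n = 0 := by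
        rw [Category.assoc, ← hdiff n, ← Category.assoc, hg, zero_comp]
      obtain ⟨a, Cc, h1, h2, h3, h4, h5⟩ := stmt16iterate X n (g ≫ ND.ι (n + 1)) hT hC
        (n + 1) le_rfl
      -- the cubical kernel family concentrated in the first face
      have compat : ∀ (i j : ℕ) (ω α : Bool), 1 ≤ i → i < j → j ≤ n + 2 →
          (if j = 1 ∧ α = false then a else 0) ≫ X.toPrecub.d n i ω
            = (if i = 1 ∧ ω = false then a else 0) ≫ X.toPrecub.d n (j - 1) α := by
        intro i j ω α hi hij hj
        rw [if_neg (by rintro ⟨hj1, -⟩; omega), zero_comp]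
        by_cases hcase : i = 1 ∧ ω = false
        · rw [if_pos hcase]
          cases α with
          | false => exact (h2 (j - 1) (by omega) (by omega)).symm
          | true => exact (h1 (j - 1) (by omega) (by omega)).symm
        · rw [if_neg hcase, zero_comp]
      obtain ⟨l₀, hl₀, -⟩ := KD.ck_univ n
        (fun i ε => if i = 1 ∧ ε = false then a else 0) compat
      obtain ⟨b₀, hb₀⟩ := hexact.2 (n + 1) Q hQ l₀
      have hb₀face : ∀ i ε, 1 ≤ i → i ≤ n + 2 →
          b₀ ≫ X.d (n + 1) i ε = (if i = 1 ∧ ε = false then a else 0) := by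
        intro i ε hi1 hi2
        rw [← KD.e_k (n + 1) i ε hi1 hi2, ← Category.assoc, hb₀, hl₀ i ε hi1 hi2]
      obtain ⟨l, hl⟩ := ND.ι_lift (n + 1) (b₀ + Cc) (fun i hi1 hi2 => by
        rw [Preadditive.add_comp, hb₀face i true hi1 hi2, h4 i hi1 hi2,
          if_neg (by rintro ⟨-, h⟩; cases h), zero_add])
      refine ⟨l, ?_⟩
      haveI := ND.ι_mono (n + 1)
      rw [← cancel_mono (ND.ι (n + 1)), Category.assoc, hdiff (n + 1), ← Category.assoc, hl,
        Preadditive.add_comp]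
      have hb1 : b₀ ≫ stmt16bd X.toPrecub (n + 1) = a := by
        rw [stmt16comp_bd]
        have hterm : ∀ i ∈ Finset.Icc 1 (n + 2),
            ((-1 : ℤ) ^ (i + 1)) • (b₀ ≫ X.toPrecub.d (n + 1) i false)
              = if i = 1 then a else 0 := by
          intro i hi
          simp only [Finset.mem_Icc] at hi
          rw [hb₀face i false hi.1 hi.2]
          by_cases h : i = 1
          · rw [if_pos h, if_pos ⟨h, rfl⟩, h]
            norm_num
          · rw [if_neg h, if_neg (by rintro ⟨h1, -⟩; exact h h1), smul_zero]
        rw [Finset.sum_congr rfl hterm, Finset.sum_ite_eq' (Finset.Icc 1 (n + 2)) 1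
          (fun _ => a), if_pos (by simp only [Finset.mem_Icc]; omega)]
      rw [hb1]
      exact h5.symm

/-- Data exhibiting `K` as the Moore chain complex `M(X)` of a precubical object `X`
in an abelian category. -/

theorem stmt16 {C : Type u} [Category.{v} C] [Abelian C] (P : C → Prop)
    (hP : IsProjectiveClass P)
    (X : PseudocubConn C) {A : C} (aug : X.X 0 ⟶ A)
    (haug : X.d 0 1 false ≫ aug = X.d 0 1 true ≫ aug)
    (KD : KernelData X.toPrecub aug)
    (hexact : PEpi P aug ∧ ∀ n, PEpi P (KD.e n))
    (ND : NormalizedData X.toPrecub) :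
    (ND.K.d 1 0 ≫ ND.ι 0 ≫ aug = 0) ∧
    ∀ Q : C, P Q →
      (∀ g : Q ⟶ A, ∃ l : Q ⟶ ND.K.X 0, l ≫ ND.ι 0 ≫ aug = g) ∧
      (∀ g : Q ⟶ ND.K.X 0, g ≫ ND.ι 0 ≫ aug = 0 →
        ∃ l : Q ⟶ ND.K.X 1, l ≫ ND.K.d 1 0 = g) ∧
      (∀ (n : ℕ) (g : Q ⟶ ND.K.X (n + 1)), g ≫ ND.K.d (n + 1) n = 0 →
        ∃ l : Q ⟶ ND.K.X (n + 2), l ≫ ND.K.d (n + 2) (n + 1) = g) := stmt16' P hP X aug haug KD hexact ND
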